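/- Let H be an infinite-dimensional complex Hilbert space and let a ∈ B(H) be positive, invertible, with ‖a‖ = 1 and nonzero support projection s(a). Then a co-minimal projection p (i.e., 1 - p has rank one) satisfies ‖a - p‖ = 1 if and only if 1 - p ≤ s(a). -/

import Mathlib

variable {H : Type*} [NormedAddCommGroup H] [InnerProductSpace ℂ H] [CompleteSpace H]

/-- The support projection of `a ∈ B(H)`: the orthogonal projection onto the eigenspace
`ker (a - 1)` of `a` for the eigenvalue `1`. -/
noncomputable def supportProjection (a : H →L[ℂ] H) : H →L[ℂ] H :=
  haveI : CompleteSpace (LinearMap.ker ((a - 1 : H →L[ℂ] H) : H →ₗ[ℂ] H)) :=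
    (ContinuousLinearMap.isClosed_ker (a - 1)).completeSpace_coe
  (LinearMap.ker ((a - 1 : H →L[ℂ] H) : H →ₗ[ℂ] H)).subtypeL ∘L Submodule.orthogonalProjectionOnto (LinearMap.ker ((a - 1 : H →L[ℂ] H) : H →ₗ[ℂ] H))

open ContinuousLinearMap RCLike
open scoped InnerProductSpace

set_option synthInstance.maxHeartbeats 1000000
set_option maxHeartbeats 4000000

lemma symmApply {T : H →L[ℂ] H} (h : IsSelfAdjoint T) (u v : H) :
    ⟪T u, v⟫_ℂ = ⟪u, T v⟫_ℂ := (ContinuousLinearMap.isSelfAdjoint_iff_isSymmetric.mp h) u v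

lemma reInner_nonneg {T : H →L[ℂ] H} (h : 0 ≤ T) (x : H) : 0 ≤ re ⟪T x, x⟫_ℂ :=
  ((ContinuousLinearMap.nonneg_iff_isPositive T).mp h).re_inner_nonneg_left x

lemma nonneg_of_reInner {T : H →L[ℂ] H} (hsa : IsSelfAdjoint T)
    (h : ∀ x, 0 ≤ re ⟪T x, x⟫_ℂ) : 0 ≤ T :=
  (ContinuousLinearMap.nonneg_iff_isPositive T).mpr ⟨ContinuousLinearMap.isSelfAdjoint_iff_isSymmetric.mp hsa, h⟩

lemma proj_reInner {e : H →L[ℂ] H} (he : IsIdempotentElem e) (hes : IsSelfAdjoint e) (x : H) :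
    re ⟪e x, x⟫_ℂ = ‖e x‖ ^ 2 := by
  have h2 : e (e x) = e x := by
    conv_lhs => rw [← ContinuousLinearMap.mul_apply, he.eq]
  calc re ⟪e x, x⟫_ℂ = re ⟪e (e x), x⟫_ℂ := by rw [h2]
    _ = re ⟪e x, e x⟫_ℂ := by rw [symmApply hes]
    _ = ‖e x‖ ^ 2 := inner_self_eq_norm_sq _

lemma proj_nonneg {e : H →L[ℂ] H} (he : IsIdempotentElem e) (hes : IsSelfAdjoint e) :
    0 ≤ e :=
  nonneg_of_reInner hes fun x => by rw [proj_reInner he hes]; positivity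

/-- Let `H` be infinite-dimensional, `a ∈ B(H)` positive invertible with `‖a‖ = 1` and
`s(a) ≠ 0`.  A co-minimal projection `p` (i.e. `1 - p` of rank one) satisfies `‖a - p‖ = 1`
iff `1 - p ≤ s(a)`. -/
theorem cominimal_norm_eq_one_iff (hinf : ¬ FiniteDimensional ℂ H) (a p : H →L[ℂ] H)
    (ha : 0 ≤ a) (hua : IsUnit a) (hna : ‖a‖ = 1) (hs : supportProjection a ≠ 0)
    (hpi : IsIdempotentElem p) (hps : IsSelfAdjoint p)
    (hrank : Module.finrank ℂ (LinearMap.range ((1 - p : H →L[ℂ] H) : H →ₗ[ℂ] H)) = 1) :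
    ‖a - p‖ = 1 ↔ 1 - p ≤ supportProjection a := by
  haveI : CompleteSpace (LinearMap.ker ((a - 1 : H →L[ℂ] H) : H →ₗ[ℂ] H)) :=
    (ContinuousLinearMap.isClosed_ker (a - 1)).completeSpace_coe
  set S := supportProjection a with hSdef
  set q : H →L[ℂ] H := 1 - p with hqdef
  have hqi : IsIdempotentElem q := hpi.one_sub
  have hqs : IsSelfAdjoint q := by
    rw [hqdef, IsSelfAdjoint, star_sub, star_one, hps.star_eq]
  -- the unit vector spanning the range of `q`
  obtain ⟨v, hv0, hvspan⟩ := finrank_eq_one_iff'.mp hrank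
  have hξ00 : (v : H) ≠ 0 := fun h => hv0 (Subtype.ext h)
  have hqfix : ∀ u : H, u ∈ LinearMap.range (q : H →ₗ[ℂ] H) → q u = u := by
    rintro u ⟨t, rfl⟩
    show q (q t) = q t
    conv_lhs => rw [← ContinuousLinearMap.mul_apply, hqi.eq]
  have hqξ0 : q (v : H) = (v : H) := hqfix _ v.2
  set ξ : H := ((‖(v : H)‖ : ℂ))⁻¹ • (v : H) with hξdef
  have hnv : ‖(v : H)‖ ≠ 0 := norm_ne_zero_iff.mpr hξ00
  have hξnorm : ‖ξ‖ = 1 := by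
    rw [hξdef, norm_smul, norm_inv]
    simp only [Complex.norm_real, Real.norm_eq_abs, abs_norm]
    field_simp
  have hqξ : q ξ = ξ := by rw [hξdef, map_smul, hqξ0]
  have hspan : ∀ u : H, ∃ c : ℂ, q u = c • ξ := by
    intro u
    obtain ⟨c, hc⟩ := hvspan ⟨q u, ⟨u, rfl⟩⟩
    refine ⟨c * (‖(v : H)‖ : ℂ), ?_⟩
    have hcc : c • (v : H) = q u := congrArg Subtype.val hc
    rw [← hcc, hξdef, smul_smul, mul_assoc]
    rw [mul_inv_cancel₀ (by exact_mod_cast hnv), mul_one]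
  have hξne : ξ ≠ 0 := by intro h; rw [h, norm_zero] at hξnorm; norm_num at hξnorm
  haveI : Nontrivial H := ⟨⟨ξ, 0, hξne⟩⟩
  -- basic positivity facts
  have haSA : IsSelfAdjoint a := .of_nonneg ha
  have ha1 : a ≤ 1 := (CStarAlgebra.norm_le_one_iff_of_nonneg a ha).mp hna.le
  have hb0 : (0 : H →L[ℂ] H) ≤ 1 - a := sub_nonneg.mpr ha1
  have hp0 : 0 ≤ p := proj_nonneg hpi hps
  have hq0 : 0 ≤ q := proj_nonneg hqi hqs
  set x : H →L[ℂ] H := a - p with hxdef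
  have hxs : IsSelfAdjoint x := haSA.sub hps
  set y : H →L[ℂ] H := 1 - x with hydef
  set z : H →L[ℂ] H := 1 + x with hzdef
  have hyE : y = (1 - a) + p := by rw [hydef, hxdef]; abel
  have hzE : z = a + q := by rw [hzdef, hxdef, hqdef]; abel
  have hy0 : 0 ≤ y := hyE ▸ add_nonneg hb0 hp0
  have hz0 : 0 ≤ z := hzE ▸ add_nonneg ha hq0
  set w : H →L[ℂ] H := CFC.sqrt y with hwdef
  have hw0 : 0 ≤ w := by rw [hwdef]; exact CFC.sqrt_nonneg _
  have hwsa : IsSelfAdjoint w := .of_nonneg hw0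
  have hww : w * w = y := by rw [hwdef, ← sq]; exact CFC.sq_sqrt y hy0
  have hzw : z = 1 + 1 - w * w := by rw [hww, hydef, hzdef]; abel
  have hcomm : w * z = z * w := by rw [hzw]; noncomm_ring
  have hyzw : y * z = w * (z * w) := by rw [← hww, mul_assoc, hcomm]
  have hyz : y * z = 1 - x * x := by rw [hydef, hzdef]; noncomm_ring
  have hrp : ∀ u, re ⟪p u, u⟫_ℂ = ‖p u‖ ^ 2 := proj_reInner hpi hps
  have hyzre : ∀ η, re ⟪(y * z) η, η⟫_ℂ = re ⟪z (w η), w η⟫_ℂ := by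
    intro η
    have hap : (y * z) η = w (z (w η)) := by rw [hyzw]; simp [ContinuousLinearMap.mul_apply]
    rw [hap, symmApply hwsa]
  have hyzre0 : ∀ η, 0 ≤ re ⟪(y * z) η, η⟫_ℂ := fun η =>
    (hyzre η) ▸ reInner_nonneg hz0 (w η)
  have hyzsa : IsSelfAdjoint (y * z) := by
    rw [hyz, IsSelfAdjoint, star_sub, star_one, star_mul, hxs.star_eq]
  have hx2le : x * x ≤ 1 := by
    have h := nonneg_of_reInner hyzsa hyzre0
    rw [hyz] at h
    exact sub_nonneg.mp h
  have hxx0 : 0 ≤ x * x := by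
    have h := star_mul_self_nonneg x
    rwa [hxs.star_eq] at h
  have hxle1 : ‖x‖ ≤ 1 := by
    have h1 : ‖star x * x‖ = ‖x‖ * ‖x‖ := CStarRing.norm_star_mul_self
    rw [hxs.star_eq] at h1
    have h2 : ‖x * x‖ ≤ 1 := (CStarAlgebra.norm_le_one_iff_of_nonneg _ hxx0).mpr hx2le
    nlinarith [norm_nonneg x]
  -- facts about the support projection
  have hSapp : ∀ u, S u = (Submodule.orthogonalProjectionOnto (LinearMap.ker ((a - 1 : H →L[ℂ] H) : H →ₗ[ℂ] H)) u : H) := fun u => rfl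
  have hSmem : ∀ u, S u ∈ LinearMap.ker ((a - 1 : H →L[ℂ] H) : H →ₗ[ℂ] H) := fun u => by
    rw [hSapp]; exact (Submodule.orthogonalProjectionOnto _ u).2
  have hSfix : ∀ u ∈ LinearMap.ker ((a - 1 : H →L[ℂ] H) : H →ₗ[ℂ] H), S u = u := fun u hu => by
    rw [hSapp]; exact Submodule.starProjection_eq_self_iff.mpr hu
  have hSsa : IsSelfAdjoint S := isSelfAdjoint_starProjection _
  have hSnorm : ∀ u, ‖S u‖ ≤ ‖u‖ := by
    intro u
    rw [hSapp]
    have h1 := ContinuousLinearMap.le_opNorm (Submodule.orthogonalProjectionOnto (LinearMap.ker ((a - 1 : H →L[ℂ] H) : H →ₗ[ℂ] H))) u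
    have h2 : ‖Submodule.orthogonalProjectionOnto (LinearMap.ker ((a - 1 : H →L[ℂ] H) : H →ₗ[ℂ] H))‖ ≤ 1 := Submodule.orthogonalProjectionOnto_norm_le _
    rw [← Submodule.coe_norm]
    nlinarith [norm_nonneg u, norm_nonneg (Submodule.orthogonalProjectionOnto (LinearMap.ker ((a - 1 : H →L[ℂ] H) : H →ₗ[ℂ] H)) u)]
  have hSS : S * S = S := by
    ext u
    simp only [ContinuousLinearMap.mul_apply]
    exact hSfix _ (hSmem u)
  have hkermem : ∀ u : H, u ∈ LinearMap.ker ((a - 1 : H →L[ℂ] H) : H →ₗ[ℂ] H) ↔ a u = u := by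
    intro u
    rw [LinearMap.mem_ker]
    simp [ContinuousLinearMap.sub_apply, ContinuousLinearMap.one_apply, sub_eq_zero]
  -- `q ≤ S` from `a ξ = ξ`
  have hC1 : a ξ = ξ → q ≤ S := by
    intro haξ
    have hξK : ξ ∈ LinearMap.ker ((a - 1 : H →L[ℂ] H) : H →ₗ[ℂ] H) := (hkermem ξ).mpr haξ
    have hrange : ∀ u, q u ∈ LinearMap.ker ((a - 1 : H →L[ℂ] H) : H →ₗ[ℂ] H) := by
      intro u
      obtain ⟨c, hc⟩ := hspan u
      rw [hc]
      exact Submodule.smul_mem _ _ hξK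
    have hSq : S * q = q := by
      ext u
      simp only [ContinuousLinearMap.mul_apply]
      exact hSfix _ (hrange u)
    have hqS : q * S = q := by
      have h := congrArg star hSq
      rwa [star_mul, hSsa.star_eq, hqs.star_eq] at h
    have hd : (S - q) * (S - q) = S - q := by
      have hexp : (S - q) * (S - q) = S * S - S * q - q * S + q * q := by noncomm_ring
      rw [hexp, hSS, hSq, hqS, hqi.eq]
      abel
    have h0 : 0 ≤ S - q := proj_nonneg hd (hSsa.sub hqs)
    exact sub_nonneg.mp h0
  -- `a ξ = ξ` from `q ≤ S`
  have hC2 : q ≤ S → a ξ = ξ := by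
    intro hle
    have h0 : 0 ≤ re ⟪(S - q) ξ, ξ⟫_ℂ := reInner_nonneg (sub_nonneg.mpr hle) ξ
    have hq1 : re ⟪q ξ, ξ⟫_ℂ = 1 := by
      rw [hqξ, inner_self_eq_norm_sq, hξnorm]; norm_num
    have hsplit : re ⟪(S - q) ξ, ξ⟫_ℂ = re ⟪S ξ, ξ⟫_ℂ - re ⟪q ξ, ξ⟫_ℂ := by
      rw [ContinuousLinearMap.sub_apply, inner_sub_left, map_sub]
    have hSre : (1 : ℝ) ≤ re ⟪S ξ, ξ⟫_ℂ := by
      rw [hsplit, hq1] at h0; linarith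
    have hSn : ‖S ξ‖ ≤ 1 := (hSnorm ξ).trans_eq hξnorm
    have hzero : ‖S ξ - ξ‖ ^ 2 ≤ 0 := by
      rw [norm_sub_sq (𝕜 := ℂ), hξnorm]
      nlinarith [norm_nonneg (S ξ)]
    have hfix : S ξ = ξ := by
      have h4 : ‖S ξ - ξ‖ = 0 := by nlinarith [norm_nonneg (S ξ - ξ)]
      exact sub_eq_zero.mp (norm_eq_zero.mp h4)
    have hmem : ξ ∈ LinearMap.ker ((a - 1 : H →L[ℂ] H) : H →ₗ[ℂ] H) := by
      apply Submodule.starProjection_eq_self_iff.mp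
      exact hfix
    exact (hkermem ξ).mp hmem
  -- `‖x‖ = 1` from `a ξ = ξ`
  have hD : a ξ = ξ → ‖x‖ = 1 := by
    intro haξ
    have hpξ : p ξ = 0 := by
      have h := hqξ
      rw [hqdef] at h
      simp only [ContinuousLinearMap.sub_apply, ContinuousLinearMap.one_apply] at h
      exact sub_eq_self.mp h
    have hxξ : x ξ = ξ := by
      rw [hxdef]
      simp [ContinuousLinearMap.sub_apply, haξ, hpξ]
    refine le_antisymm hxle1 ?_
    have h := x.le_opNorm ξ
    rw [hxξ, hξnorm, mul_one] at h
    linarith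
  -- `a ξ = ξ` from `‖x‖ = 1`
  have hE : ‖x‖ = 1 → a ξ = ξ := by
    intro hxn
    set a' : H →L[ℂ] H := ↑hua.unit⁻¹ with ha'def
    have ha'a : a' * a = 1 := hua.val_inv_mul
    have h2one : ‖(1 : H →L[ℂ] H)‖ = 1 := by
      rw [ContinuousLinearMap.one_def]; exact ContinuousLinearMap.norm_id
    have hMpos : 0 < ‖a'‖ := by
      rw [norm_pos_iff]
      intro h0
      rw [h0, zero_mul] at ha'a
      rw [← ha'a, norm_zero] at h2one
      norm_num at h2one
    have hM1 : 1 ≤ ‖a'‖ := by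
      calc 1 = ‖(1 : H →L[ℂ] H)‖ := h2one.symm
        _ = ‖a' * a‖ := by rw [ha'a]
        _ ≤ ‖a'‖ * ‖a‖ := norm_mul_le _ _
        _ = ‖a'‖ := by rw [hna, mul_one]
    set δ : ℝ := (‖a'‖⁻¹) ^ 2 with hδdef
    have hδpos : 0 < δ := by positivity
    have hinv1 : ‖a'‖⁻¹ ≤ 1 := by
      rw [inv_le_one_iff₀]; right; exact hM1
    have hδ1 : δ ≤ 1 := by
      rw [hδdef]; nlinarith [inv_nonneg.mpr hMpos.le]
    have hδa : ∀ η : H, δ * ‖η‖ ^ 2 ≤ re ⟪a η, η⟫_ℂ := by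
      intro η
      set r : H →L[ℂ] H := CFC.sqrt a with hrdef
      have hr0 : 0 ≤ r := by rw [hrdef]; exact CFC.sqrt_nonneg _
      have hrsa : IsSelfAdjoint r := .of_nonneg hr0
      have hrr : r * r = a := by rw [hrdef, ← sq]; exact CFC.sq_sqrt a ha
      have hrn : ‖r‖ ≤ 1 := by
        have h1 : ‖star r * r‖ = ‖r‖ * ‖r‖ := CStarRing.norm_star_mul_self
        rw [hrsa.star_eq, hrr, hna] at h1
        nlinarith [norm_nonneg r]
      have h2 : ‖η‖ ≤ ‖a'‖ * ‖a η‖ := by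
        calc ‖η‖ = ‖(a' * a) η‖ := by rw [ha'a]; simp
          _ = ‖a' (a η)‖ := by rw [ContinuousLinearMap.mul_apply]
          _ ≤ ‖a'‖ * ‖a η‖ := a'.le_opNorm _
      have h3 : ‖a η‖ ≤ ‖r η‖ := by
        calc ‖a η‖ = ‖r (r η)‖ := by rw [← hrr]; simp [ContinuousLinearMap.mul_apply]
          _ ≤ ‖r‖ * ‖r η‖ := r.le_opNorm _
          _ ≤ 1 * ‖r η‖ := by gcongr
          _ = ‖r η‖ := one_mul _
      have h4 : re ⟪a η, η⟫_ℂ = ‖r η‖ ^ 2 := by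
        conv_lhs => rw [← hrr, ContinuousLinearMap.mul_apply, symmApply hrsa,
          inner_self_eq_norm_sq]
      have hstep : ‖η‖ ≤ ‖a'‖ * ‖r η‖ := h2.trans (by gcongr)
      have hBB : ‖a'‖⁻¹ * ‖a'‖ = 1 := inv_mul_cancel₀ hMpos.ne'
      rw [h4, hδdef]
      have hA : ‖η‖ ^ 2 ≤ ‖a'‖ ^ 2 * ‖r η‖ ^ 2 := by
        nlinarith [mul_self_le_mul_self (norm_nonneg η) hstep]
      have hB : ‖a'‖⁻¹ ^ 2 * ‖η‖ ^ 2 ≤ ‖a'‖⁻¹ ^ 2 * (‖a'‖ ^ 2 * ‖r η‖ ^ 2) :=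
        mul_le_mul_of_nonneg_left hA (by positivity)
      have hC : ‖a'‖⁻¹ ^ 2 * (‖a'‖ ^ 2 * ‖r η‖ ^ 2) = ‖r η‖ ^ 2 := by
        field_simp
      linarith
    set wb : H →L[ℂ] H := CFC.sqrt (1 - a) with hwbdef
    have hwb0 : 0 ≤ wb := by rw [hwbdef]; exact CFC.sqrt_nonneg _
    have hwbsa : IsSelfAdjoint wb := .of_nonneg hwb0
    have hwbwb : wb * wb = 1 - a := by rw [hwbdef, ← sq]; exact CFC.sq_sqrt _ hb0
    have hwbn : ‖wb‖ ≤ 1 := by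
      have h1 : ‖star wb * wb‖ = ‖wb‖ * ‖wb‖ := CStarRing.norm_star_mul_self
      rw [hwbsa.star_eq, hwbwb] at h1
      have h2 : ‖(1 : H →L[ℂ] H) - a‖ ≤ 1 :=
        (CStarAlgebra.norm_le_one_iff_of_nonneg _ hb0).mpr (by simpa using ha)
      nlinarith [norm_nonneg wb]
    have hkey : ∀ ε : ℝ, 0 < ε → ε ≤ 1 → ‖wb ξ‖ ≤ ε := by
      intro ε hε hε1
      set t : ℝ := δ * ε ^ 2 / 16 with htdef
      have ht0 : 0 < t := by positivity
      have ht1 : t < 1 := by rw [htdef]; nlinarith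
      have hnot : ¬ ∀ u : H, ‖x u‖ ≤ Real.sqrt (1 - t) * ‖u‖ := by
        intro hc
        have hb := ContinuousLinearMap.opNorm_le_bound x (Real.sqrt_nonneg _) hc
        rw [hxn] at hb
        have hs1 : Real.sqrt (1 - t) < 1 := by
          have h1 := Real.sqrt_lt_sqrt (by linarith : (0:ℝ) ≤ 1 - t) (by linarith : 1 - t < 1)
          rwa [Real.sqrt_one] at h1
        linarith
      push_neg at hnot
      obtain ⟨η₀, hη₀⟩ := hnot
      have hη₀0 : η₀ ≠ 0 := by
        rintro rfl
        simp only [map_zero, norm_zero, mul_zero] at hη₀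
        exact lt_irrefl 0 hη₀
      have hpos : (0 : ℝ) < ‖η₀‖ := norm_pos_iff.mpr hη₀0
      set η : H := ((‖η₀‖ : ℂ))⁻¹ • η₀ with hηdef
      have hηn : ‖η‖ = 1 := by
        rw [hηdef, norm_smul, norm_inv]
        simp only [Complex.norm_real, Real.norm_eq_abs, abs_norm]
        field_simp
      have hxη : Real.sqrt (1 - t) < ‖x η‖ := by
        rw [hηdef, map_smul, norm_smul, norm_inv]
        simp only [Complex.norm_real, Real.norm_eq_abs, abs_norm]
        rw [show ‖η₀‖⁻¹ * ‖x η₀‖ = ‖x η₀‖ / ‖η₀‖ from (div_eq_inv_mul _ _).symm,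
          lt_div_iff₀ hpos]
        exact hη₀
      have hxη2 : 1 - t < ‖x η‖ ^ 2 := by
        have h1 : (Real.sqrt (1 - t)) ^ 2 = 1 - t := Real.sq_sqrt (by linarith)
        nlinarith [Real.sqrt_nonneg (1 - t), norm_nonneg (x η)]
      have c1 : re ⟪(y * z) η, η⟫_ℂ = 1 - ‖x η‖ ^ 2 := by
        have hap : (y * z) η = η - x (x η) := by
          rw [hyz]
          simp [ContinuousLinearMap.sub_apply, ContinuousLinearMap.one_apply,
            ContinuousLinearMap.mul_apply]
        rw [hap, inner_sub_left, map_sub, symmApply hxs, inner_self_eq_norm_sq,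
          inner_self_eq_norm_sq, hηn]
        norm_num
      have c2 : δ * re ⟪y η, η⟫_ℂ ≤ re ⟪(y * z) η, η⟫_ℂ := by
        have h1 : re ⟪(y * z) η, η⟫_ℂ = re ⟪z (w η), w η⟫_ℂ := hyzre η
        have h2 : re ⟪y η, η⟫_ℂ = ‖w η‖ ^ 2 := by
          conv_lhs => rw [← hww, ContinuousLinearMap.mul_apply, symmApply hwsa,
            inner_self_eq_norm_sq]
        have hza : z (w η) = a (w η) + q (w η) := by
          rw [hzE]; simp [ContinuousLinearMap.add_apply]
        have h3 : δ * ‖w η‖ ^ 2 ≤ re ⟪z (w η), w η⟫_ℂ := by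
          have ha' := hδa (w η)
          have hq' : 0 ≤ re ⟪q (w η), w η⟫_ℂ := reInner_nonneg hq0 _
          rw [hza, inner_add_left, map_add]
          linarith
        rw [h1, h2]; exact h3
      have c3 : re ⟪y η, η⟫_ℂ < ε ^ 2 / 16 := by
        have h5 := c2
        rw [c1] at h5
        have h6 : δ * re ⟪y η, η⟫_ℂ < δ * (ε ^ 2 / 16) := by
          have ht : t = δ * ε ^ 2 / 16 := htdef
          nlinarith [h5, hxη2]
        exact lt_of_mul_lt_mul_left h6 hδpos.le
      have hbre : re ⟪(1 - a) η, η⟫_ℂ + re ⟪p η, η⟫_ℂ = re ⟪y η, η⟫_ℂ := by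
        rw [hyE, ContinuousLinearMap.add_apply, inner_add_left, map_add]
      have hbre0 : 0 ≤ re ⟪(1 - a) η, η⟫_ℂ := reInner_nonneg hb0 _
      have c4 : ‖p η‖ ≤ ε / 4 := by
        have h5 : ‖p η‖ ^ 2 < ε ^ 2 / 16 := by
          have := hrp η
          nlinarith
        nlinarith [norm_nonneg (p η)]
      have c5 : ‖wb η‖ ≤ ε / 4 := by
        have h6 : re ⟪(1 - a) η, η⟫_ℂ = ‖wb η‖ ^ 2 := by
          conv_lhs => rw [← hwbwb, ContinuousLinearMap.mul_apply, symmApply hwbsa,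
            inner_self_eq_norm_sq]
        have h7 : ‖wb η‖ ^ 2 < ε ^ 2 / 16 := by
          nlinarith [hrp η, norm_nonneg (p η)]
        nlinarith [norm_nonneg (wb η)]
      obtain ⟨c, hc⟩ := hspan η
      have hqη : q η = η - p η := by
        rw [hqdef]
        simp [ContinuousLinearMap.sub_apply, ContinuousLinearMap.one_apply]
      have hcabs : 3 / 4 ≤ ‖c‖ := by
        have h8 : ‖q η‖ = ‖c‖ := by rw [hc, norm_smul, hξnorm, mul_one]
        have h9 : 1 - ε / 4 ≤ ‖q η‖ := by
          rw [hqη]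
          have h10 := norm_sub_norm_le η (p η)
          rw [hηn] at h10
          linarith
        linarith
      have c6 : ‖wb (q η)‖ ≤ ε / 2 := by
        rw [hqη, map_sub]
        have h11 := wb.le_opNorm (p η)
        have h12 := norm_sub_le (wb η) (wb (p η))
        have h13 : ‖wb (p η)‖ ≤ ε / 4 := by nlinarith [norm_nonneg (p η), norm_nonneg wb]
        linarith
      have c7 : ‖wb (q η)‖ = ‖c‖ * ‖wb ξ‖ := by rw [hc, map_smul, norm_smul]
      have c8 : (3 / 4 : ℝ) * ‖wb ξ‖ ≤ ε / 2 := by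
        calc (3 / 4 : ℝ) * ‖wb ξ‖ ≤ ‖c‖ * ‖wb ξ‖ := by gcongr
          _ = ‖wb (q η)‖ := c7.symm
          _ ≤ ε / 2 := c6
      linarith
    have hwbξ : wb ξ = 0 := by
      have hle : ∀ ε : ℝ, 0 < ε → ‖wb ξ‖ ≤ ε := by
        intro ε hε
        rcases le_total ε 1 with h | h
        · exact hkey ε hε h
        · exact (hkey 1 one_pos le_rfl).trans h
      by_contra h0
      have hpos : 0 < ‖wb ξ‖ := norm_pos_iff.mpr h0
      have := hle (‖wb ξ‖ / 2) (by positivity)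
      linarith
    have hbξ : (1 - a) ξ = 0 := by
      rw [← hwbwb, ContinuousLinearMap.mul_apply, hwbξ, map_zero]
    have h14 : ξ - a ξ = 0 := by
      simpa [ContinuousLinearMap.sub_apply, ContinuousLinearMap.one_apply] using hbξ
    have := sub_eq_zero.mp h14
    exact this.symm
  constructor
  · intro hnorm
    exact hC1 (hE hnorm)
  · intro hle
    exact hD (hC2 hle)
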